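/- Fix r_0 = 1. For positive reals r_1 ≤ r_2 and x, y ∈ {1,2}, the dihedral angle T(x,y) between the plane through the centers of the pit, head (radius r_1), and a bead of radius r_x, and the plane through the centers of the pit, head, and a bead of radius r_y—where all four spheres are mutually tangent—satisfies T(x,y) > π/3. -/

import Mathlib

open Real

private lemma aux1 (a : ℝ) (ha : 0 < a) (hL : 0 < a*(1+a)*(a+a) - a*a*(1+a^2)) :
    (a*(1+a)*(a+a) - a*a*(1+a^2))^2 < a^2*(a*a*((1+a+a)*(1+a+a))) := by
  nlinarith [pow_pos ha 4, sq_nonneg a, hL, pow_pos ha 6]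

private lemma aux2 (a r : ℝ) (ha : 0 < a) (hr : a ≤ r)
    (hL : 0 < a*(1+a)*(a+r) - a*r*(1+a^2)) :
    (a*(1+a)*(a+r) - a*r*(1+a^2))^2 < a^2*(a*r*((1+a+a)*(1+a+r))) := by
  have hs : 0 < 1 + a + r - a*r := by nlinarith
  have h1 : a*(1+a+r-a*r) < r*(1+2*a) := by nlinarith [pow_pos ha 3]
  have h2 : 1+a+r-a*r < 1+a+r := by nlinarith
  nlinarith [mul_lt_mul'' h1 h2 (by positivity) (le_of_lt hs), pow_pos ha 3, sq_nonneg a]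

private lemma aux3 (a r : ℝ) (ha : 0 < a) (hr : a ≤ r)
    (hL : 0 < a*(1+a)*(r+r) - r*r*(1+a^2)) :
    (a*(1+a)*(r+r) - r*r*(1+a^2))^2 < a^2*(r*r*((1+a+r)*(1+a+r))) := by
  have hrp : 0 < r := lt_of_lt_of_le ha hr
  have h1 : 2*a*(1+a) - r*(1+a^2) < a*(1+a+r) := by nlinarith [pow_pos ha 3]
  have h0 : 0 < 2*a*(1+a) - r*(1+a^2) := by nlinarith
  have h2 := mul_lt_mul'' h1 h1 (le_of_lt h0) (le_of_lt h0)
  nlinarith [mul_lt_mul_of_pos_left h2 (mul_pos hrp hrp)]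

set_option maxHeartbeats 1000000 in
theorem stmt_2 (r₁ r₂ rx ry : ℝ) (h₁ : 0 < r₁) (h₁₂ : r₁ ≤ r₂)
    (hx : rx = r₁ ∨ rx = r₂) (hy : ry = r₁ ∨ ry = r₂)
    (Mxy M1x M1y T : ℝ)
    (hMxy : Mxy ∈ Set.Ioo 0 π) (hM1x : M1x ∈ Set.Ioo 0 π) (hM1y : M1y ∈ Set.Ioo 0 π)
    (hcMxy : Real.cos Mxy =
      ((1 + rx)^2 + (1 + ry)^2 - (rx + ry)^2) / (2 * (1 + rx) * (1 + ry)))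
    (hcM1x : Real.cos M1x =
      ((1 + r₁)^2 + (1 + rx)^2 - (r₁ + rx)^2) / (2 * (1 + r₁) * (1 + rx)))
    (hcM1y : Real.cos M1y =
      ((1 + r₁)^2 + (1 + ry)^2 - (r₁ + ry)^2) / (2 * (1 + r₁) * (1 + ry)))
    (hT : T ∈ Set.Ioo 0 π)
    (hcT : Real.cos T =
      (Real.cos Mxy - Real.cos M1x * Real.cos M1y) / (Real.sin M1x * Real.sin M1y)) :
    π / 3 < T := by
  obtain ⟨hT0, hTπ⟩ := hT
  have hax : r₁ ≤ rx := by rcases hx with h|h <;> rw [h] <;> linarith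
  have hay : r₁ ≤ ry := by rcases hy with h|h <;> rw [h] <;> linarith
  have hpx : 0 < rx := lt_of_lt_of_le h₁ hax
  have hpy : 0 < ry := lt_of_lt_of_le h₁ hay
  have h1a : (0:ℝ) < 1 + r₁ := by linarith
  have h1p : (0:ℝ) < 1 + rx := by linarith
  have h1q : (0:ℝ) < 1 + ry := by linarith
  have hsx : 0 < Real.sin M1x := Real.sin_pos_of_pos_of_lt_pi hM1x.1 hM1x.2
  have hsy : 0 < Real.sin M1y := Real.sin_pos_of_pos_of_lt_pi hM1y.1 hM1y.2
  have hD : (0:ℝ) < (1+r₁)^2*(1+rx)*(1+ry) := by positivity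
  have hmain : Real.cos T < 1/2 := by
    rw [hcT, div_lt_iff₀ (mul_pos hsx hsy)]
    have eX : Real.cos Mxy - Real.cos M1x * Real.cos M1y
        = (2*(r₁*(1+r₁)*(rx+ry) - rx*ry*(1+r₁^2))) / ((1+r₁)^2*(1+rx)*(1+ry)) := by
      rw [hcMxy, hcM1x, hcM1y]; field_simp; ring
    rcases le_or_gt (r₁*(1+r₁)*(rx+ry) - rx*ry*(1+r₁^2)) 0 with hL | hL
    · have hXle : Real.cos Mxy - Real.cos M1x * Real.cos M1y ≤ 0 := by
        rw [eX]
        apply div_nonpos_of_nonpos_of_nonneg (by linarith) (le_of_lt hD)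
      nlinarith [mul_pos hsx hsy]
    · have hs2x : Real.sin M1x ^ 2 = 4*(r₁*rx*(1+r₁+rx)) / ((1+r₁)^2*(1+rx)^2) := by
        have h := Real.sin_sq_add_cos_sq M1x
        have : Real.sin M1x ^ 2 = 1 - Real.cos M1x ^ 2 := by linarith
        rw [this, hcM1x]; field_simp; ring
      have hs2y : Real.sin M1y ^ 2 = 4*(r₁*ry*(1+r₁+ry)) / ((1+r₁)^2*(1+ry)^2) := by
        have h := Real.sin_sq_add_cos_sq M1y
        have : Real.sin M1y ^ 2 = 1 - Real.cos M1y ^ 2 := by linarith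
        rw [this, hcM1y]; field_simp; ring
      have hkey : (r₁*(1+r₁)*(rx+ry) - rx*ry*(1+r₁^2))^2
          < r₁^2*(rx*ry*((1+r₁+rx)*(1+r₁+ry))) := by
        rcases hx with h|h <;> rcases hy with h'|h' <;> rw [h, h'] <;> rw [h, h'] at hL
        · nlinarith [aux1 r₁ h₁ (by nlinarith)]
        · nlinarith [aux2 r₁ r₂ h₁ h₁₂ (by nlinarith)]
        · nlinarith [aux2 r₁ r₂ h₁ h₁₂ (by nlinarith)]
        · nlinarith [aux3 r₁ r₂ h₁ h₁₂ (by nlinarith)]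
      have hane : (1+r₁) ≠ 0 := ne_of_gt h1a
      have hpne : (1+rx) ≠ 0 := ne_of_gt h1p
      have hqne : (1+ry) ≠ 0 := ne_of_gt h1q
      have eA : (2*(Real.cos Mxy - Real.cos M1x * Real.cos M1y))^2
          * ((1+r₁)^2*(1+rx)*(1+ry))^2
          = 16*(r₁*(1+r₁)*(rx+ry) - rx*ry*(1+r₁^2))^2 := by
        rw [eX]; field_simp; ring
      have eB : (Real.sin M1x * Real.sin M1y)^2 * ((1+r₁)^2*(1+rx)*(1+ry))^2
          = 16*(r₁^2*(rx*ry*((1+r₁+rx)*(1+r₁+ry)))) := by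
        rw [mul_pow, hs2x, hs2y]; field_simp; ring
      have hsq : (2*(Real.cos Mxy - Real.cos M1x * Real.cos M1y))^2
          < (Real.sin M1x * Real.sin M1y)^2 := by
        have hD2 : (0:ℝ) < ((1+r₁)^2*(1+rx)*(1+ry))^2 := by positivity
        have hlt : (2*(Real.cos Mxy - Real.cos M1x * Real.cos M1y))^2
            * ((1+r₁)^2*(1+rx)*(1+ry))^2
            < (Real.sin M1x * Real.sin M1y)^2 * ((1+r₁)^2*(1+rx)*(1+ry))^2 := by
          rw [eA, eB]; linarith [hkey]
        exact (mul_lt_mul_iff_of_pos_right hD2).mp hlt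
      have h2X := lt_of_pow_lt_pow_left₀ 2 (le_of_lt (mul_pos hsx hsy)) hsq
      linarith
  have hmem1 : T ∈ Set.Icc 0 π := ⟨hT0.le, hTπ.le⟩
  have hmem2 : π/3 ∈ Set.Icc 0 π := ⟨by positivity, by linarith [Real.pi_pos]⟩
  have hc3 : Real.cos T < Real.cos (π/3) := by rw [Real.cos_pi_div_three]; linarith
  exact (Real.strictAntiOn_cos.lt_iff_gt hmem1 hmem2).mp hc3
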